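/- Given a value F ≥ 0 and submodular, non-decreasing functions r_A, r_B on 2^E with r_A(∅)=r_B(∅)=0, if F ≤ min_{T⊆E} ( r_A(E\T) + r_B(T) ), then there exists x ∈ ℝ^E with x ≥ 0, x(U) ≤ r_A(U) and x(U) ≤ r_B(U) for all U ⊆ E, and x(E) = F. -/

import Mathlib

open Finset

/-- min of two submodular functions whose difference is monotone is submodular. -/
lemma min_submod {E : Type*} [DecidableEq E] (f h : Finset E → ℝ)
    (hf : ∀ U V, f (U ∪ V) + f (U ∩ V) ≤ f U + f V)
    (hh : ∀ U V, h (U ∪ V) + h (U ∩ V) ≤ h U + h V)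
    (hmono : ∀ U V, U ⊆ V → f U - h U ≤ f V - h V) :
    ∀ U V, min (f (U ∪ V)) (h (U ∪ V)) + min (f (U ∩ V)) (h (U ∩ V)) ≤
      min (f U) (h U) + min (f V) (h V) := by
  intro U V
  rcases le_total (f U) (h U) with hU | hU <;> rcases le_total (f V) (h V) with hV | hV
  · rw [min_eq_left hU, min_eq_left hV]
    have := hf U V
    have := min_le_left (f (U ∪ V)) (h (U ∪ V))
    have := min_le_left (f (U ∩ V)) (h (U ∩ V))
    linarith
  · rw [min_eq_left hU, min_eq_right hV]
    have h1 := min_le_right (f (U ∪ V)) (h (U ∪ V))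
    have h2 := min_le_left (f (U ∩ V)) (h (U ∩ V))
    have h3 := hh U V
    have h4 := hmono (U ∩ V) U inter_subset_left
    linarith
  · rw [min_eq_right hU, min_eq_left hV]
    have h1 := min_le_right (f (U ∪ V)) (h (U ∪ V))
    have h2 := min_le_left (f (U ∩ V)) (h (U ∩ V))
    have h3 := hh U V
    have h4 := hmono (U ∩ V) V inter_subset_right
    linarith
  · rw [min_eq_right hU, min_eq_right hV]
    have := hh U V
    have := min_le_right (f (U ∪ V)) (h (U ∪ V))
    have := min_le_right (f (U ∩ V)) (h (U ∩ V))
    linarith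

lemma key_step {E : Type*} [DecidableEq E] (s : Finset E) :
    ∀ (rA rB : Finset E → ℝ), rA ∅ = 0 → rB ∅ = 0 →
    (∀ U V : Finset E, U ⊆ V → rA U ≤ rA V) →
    (∀ U V : Finset E, U ⊆ V → rB U ≤ rB V) →
    (∀ U V : Finset E, rA (U ∪ V) + rA (U ∩ V) ≤ rA U + rA V) →
    (∀ U V : Finset E, rB (U ∪ V) + rB (U ∩ V) ≤ rB U + rB V) →
    ∀ F : ℝ, 0 ≤ F → (∀ T ⊆ s, F ≤ rA (s \ T) + rB T) →
    ∃ x : E → ℝ, (∀ e, 0 ≤ x e) ∧ (∀ e, e ∉ s → x e = 0) ∧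
      (∀ U, U ⊆ s → ∑ e ∈ U, x e ≤ rA U) ∧
      (∀ U, U ⊆ s → ∑ e ∈ U, x e ≤ rB U) ∧ ∑ e ∈ s, x e = F := by
  induction s using Finset.strongInduction with
  | _ s ih =>
  intro rA rB hA0 hB0 hAm hBm hAs hBs F hF0 hF
  rcases s.eq_empty_or_nonempty with rfl | ⟨e, he⟩
  · have h0 := hF ∅ (by simp)
    simp [hA0, hB0] at h0
    have hFz : F = 0 := le_antisymm h0 hF0
    refine ⟨fun _ => 0, fun _ => le_refl 0, fun _ _ => rfl, ?_, ?_, by simp [hFz]⟩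
    · intro U _
      simpa using hA0 ▸ hAm ∅ U (empty_subset U)
    · intro U _
      simpa using hB0 ▸ hBm ∅ U (empty_subset U)
  · set s' := s.erase e with hs'
    have hs'ss : s' ⊂ s := erase_ssubset he
    have hs's : s' ⊆ s := erase_subset e s
    set g : Finset E → ℝ := fun T => rA (s \ T) + rB (insert e T) - F with hg
    have hPne : (s'.powerset).Nonempty := ⟨∅, by simp⟩
    set t : ℝ := min (rA {e}) (min (rB {e}) (min F (s'.powerset.inf' hPne g))) with ht
    have hrA0 : (0:ℝ) ≤ rA {e} := hA0 ▸ hAm ∅ {e} (empty_subset _)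
    have hrB0 : (0:ℝ) ≤ rB {e} := hB0 ▸ hBm ∅ {e} (empty_subset _)
    have ht_A : t ≤ rA {e} := min_le_left _ _
    have ht_B : t ≤ rB {e} := le_trans (min_le_right _ _) (min_le_left _ _)
    have ht_F : t ≤ F :=
      le_trans (min_le_right _ _) (le_trans (min_le_right _ _) (min_le_left _ _))
    have ht_g : ∀ T ⊆ s', t ≤ g T := by
      intro T hT
      refine le_trans (le_trans (min_le_right _ _)
        (le_trans (min_le_right _ _) (min_le_right _ _))) ?_
      exact Finset.inf'_le g (mem_powerset.mpr hT)
    -- facts about membership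
    have heM : ∀ T ⊆ s', e ∉ T := fun T hT hmem => (notMem_erase e s) (hT hmem)
    have hins : ∀ T ⊆ s', insert e T ⊆ s := fun T hT => insert_subset he (hT.trans hs's)
    have id2 : ∀ T ⊆ s', s' \ T = s \ insert e T := by
      intro T hT
      ext a
      simp only [mem_sdiff, hs', mem_erase, mem_insert]
      tauto
    have id1 : ∀ T ⊆ s', insert e (s \ insert e T) = s \ T := by
      intro T hT
      have heT := heM T hT
      ext a
      simp only [mem_insert, mem_sdiff]
      constructor
      · rintro (rfl | ⟨ha, hni⟩)
        · exact ⟨he, heT⟩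
        · exact ⟨ha, fun h => hni (Or.inr h)⟩
      · rintro ⟨ha, hna⟩
        by_cases hae : a = e
        · exact Or.inl hae
        · exact Or.inr ⟨ha, fun h => by rcases h with h | h; exact hae h; exact hna h⟩
    have hg0 : ∀ T ⊆ s', 0 ≤ g T := by
      intro T hT
      have h1 := hF (insert e T) (hins T hT)
      have h2 : rA (s \ insert e T) ≤ rA (s \ T) :=
        hAm _ _ (sdiff_subset_sdiff (Finset.Subset.refl s) (subset_insert e T))
      simp only [hg]
      linarith
    have ht0 : 0 ≤ t := by
      refine le_min hrA0 (le_min hrB0 (le_min hF0 ?_))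
      exact Finset.le_inf' hPne g (fun T hT => hg0 T (mem_powerset.mp hT))
    -- lower bound for t
    have hLB : ∀ T ⊆ s', F - rA (s \ insert e T) - rB T ≤ t := by
      intro T hT
      have heT := heM T hT
      have hTs : T ⊆ s := hT.trans hs's
      refine le_min ?_ (le_min ?_ (le_min ?_ ?_))
      · -- ≤ rA {e}
        have h1 := hF T hTs
        have h2 := hAs (s \ insert e T) {e}
        rw [union_comm, ← insert_eq, id1 T hT,
          Finset.inter_singleton_of_notMem (by simp), hA0] at h2
        linarith
      · -- ≤ rB {e}
        have h1 := hF (insert e T) (hins T hT)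
        have h2 := hBs T {e}
        rw [union_comm, ← insert_eq, Finset.inter_singleton_of_notMem heT, hB0] at h2
        linarith
      · -- ≤ F
        have h1 : (0:ℝ) ≤ rA (s \ insert e T) := hA0 ▸ hAm ∅ _ (empty_subset _)
        have h2 : (0:ℝ) ≤ rB T := hB0 ▸ hBm ∅ _ (empty_subset _)
        linarith
      · -- ≤ inf' g
        refine Finset.le_inf' hPne g ?_
        intro S hS
        rw [mem_powerset] at hS
        have heS := heM S hS
        have eqU : (s \ insert e T) ∪ (s \ S) = s \ (T ∩ S) := by
          ext a
          simp only [mem_union, mem_sdiff, mem_insert, mem_inter]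
          constructor
          · rintro (⟨h1, h2⟩ | ⟨h1, h2⟩)
            · exact ⟨h1, fun hh => h2 (Or.inr hh.1)⟩
            · exact ⟨h1, fun hh => h2 hh.2⟩
          · rintro ⟨h1, h2⟩
            by_cases haT : a ∈ T
            · exact Or.inr ⟨h1, fun hh => h2 ⟨haT, hh⟩⟩
            · by_cases hae : a = e
              · exact Or.inr ⟨h1, fun hh => heS (hae ▸ hh)⟩
              · exact Or.inl ⟨h1, fun hh => by rcases hh with hh | hh
                                               exacts [hae hh, haT hh]⟩
        have eqI : (s \ insert e T) ∩ (s \ S) = s \ insert e (T ∪ S) := by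
          ext a
          simp only [mem_inter, mem_sdiff, mem_insert, mem_union]
          tauto
        have h2 := hAs (s \ insert e T) (s \ S)
        rw [eqU, eqI] at h2
        have h3 := hBs T (insert e S)
        have eqBU : T ∪ insert e S = insert e (T ∪ S) := union_insert e T S
        have eqBI : T ∩ insert e S = T ∩ S := by
          ext a
          simp only [mem_inter, mem_insert]
          constructor
          · rintro ⟨h1, rfl | h1'⟩
            · exact absurd h1 heT
            · exact ⟨h1, h1'⟩
          · rintro ⟨h1, h1'⟩
            exact ⟨h1, Or.inr h1'⟩
        rw [eqBU, eqBI] at h3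
        have h4 := hF (T ∩ S) ((inter_subset_left).trans hTs)
        have h5 := hF (insert e (T ∪ S)) (insert_subset he (union_subset hTs (hS.trans hs's)))
        simp only [hg]
        linarith
    -- residual functions
    set rA' : Finset E → ℝ := fun U => min (rA U) (rA (insert e U) - t) with hrA'
    set rB' : Finset E → ℝ := fun U => min (rB U) (rB (insert e U) - t) with hrB'
    have hiUU : ∀ U V : Finset E, insert e U ∪ insert e V = insert e (U ∪ V) := by
      intro U V; ext a; simp only [mem_union, mem_insert]; tauto
    have hiII : ∀ U V : Finset E, insert e U ∩ insert e V = insert e (U ∩ V) := by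
      intro U V; ext a; simp only [mem_inter, mem_insert]; tauto
    have hresid : ∀ (r : Finset E → ℝ), r ∅ = 0 →
        (∀ U V : Finset E, U ⊆ V → r U ≤ r V) →
        (∀ U V : Finset E, r (U ∪ V) + r (U ∩ V) ≤ r U + r V) →
        t ≤ r {e} →
        (fun U => min (r U) (r (insert e U) - t)) ∅ = 0 ∧
        (∀ U V : Finset E, U ⊆ V →
          min (r U) (r (insert e U) - t) ≤ min (r V) (r (insert e V) - t)) ∧
        (∀ U V : Finset E,
          min (r (U ∪ V)) (r (insert e (U ∪ V)) - t) +
          min (r (U ∩ V)) (r (insert e (U ∩ V)) - t) ≤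
          min (r U) (r (insert e U) - t) + min (r V) (r (insert e V) - t)) := by
      intro r h0 hm hsub hte
      refine ⟨?_, ?_, ?_⟩
      · show min (r ∅) (r (insert e ∅) - t) = 0
        rw [h0, insert_empty_eq]
        exact min_eq_left (by linarith)
      · intro U V hUV
        exact min_le_min (hm U V hUV)
          (by linarith [hm (insert e U) (insert e V) (insert_subset_insert e hUV)])
      · have := min_submod r (fun U => r (insert e U) - t) hsub
          (fun U V => by
            have := hsub (insert e U) (insert e V)
            rw [hiUU U V, hiII U V] at this
            try simp only []
            linarith)
          (fun U V hUV => by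
            try simp only []
            by_cases heV : e ∈ V
            · rw [insert_eq_self.mpr heV]
              have := hm U (insert e U) (subset_insert e U)
              linarith
            · have h2 := hsub (insert e U) V
              have e1 : insert e U ∪ V = insert e V := by
                rw [insert_union, union_eq_right.mpr hUV]
              have e2 : insert e U ∩ V = U := by
                rw [insert_inter_of_notMem heV, inter_eq_left.mpr hUV]
              rw [e1, e2] at h2
              linarith)
        intro U V
        exact this U V
    obtain ⟨hA0', hAm', hAs'⟩ := hresid rA hA0 hAm hAs ht_A
    obtain ⟨hB0', hBm', hBs'⟩ := hresid rB hB0 hBm hBs ht_B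
    have hF' : ∀ T ⊆ s', F - t ≤ rA' (s' \ T) + rB' T := by
      intro T hT
      have heT := heM T hT
      have hTs : T ⊆ s := hT.trans hs's
      have e3 : insert e (s' \ T) = s \ T := by
        rw [id2 T hT]; exact id1 T hT
      have eA : rA' (s' \ T) = min (rA (s \ insert e T)) (rA (s \ T) - t) := by
        rw [hrA']
        simp only []
        rw [id2 T hT, id1 T hT]
      have h1 : F - t ≤ rA (s \ insert e T) + rB T := by linarith [hLB T hT]
      have h2 : F - t ≤ (rA (s \ T) - t) + rB T := by linarith [hF T hTs]
      have h3 : F - t ≤ rA (s \ insert e T) + (rB (insert e T) - t) := by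
        linarith [hF (insert e T) (hins T hT)]
      have h4 : F - t ≤ (rA (s \ T) - t) + (rB (insert e T) - t) := by
        have := ht_g T hT
        simp only [hg] at this
        linarith
      rw [eA]
      show F - t ≤ _ + min (rB T) (rB (insert e T) - t)
      rcases le_total (rA (s \ insert e T)) (rA (s \ T) - t) with hh | hh <;>
        rcases le_total (rB T) (rB (insert e T) - t) with hh' | hh' <;>
        simp only [min_eq_left, min_eq_right, hh, hh'] <;> linarith
    obtain ⟨x', hx'0, hx'z, hx'A, hx'B, hx's⟩ :=
      ih s' hs'ss rA' rB' hA0' hB0' hAm' hBm' hAs' hBs' (F - t) (by linarith) hF'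
    refine ⟨fun a => if a = e then t else x' a, ?_, ?_, ?_, ?_, ?_⟩
    · intro a; by_cases ha : a = e <;> simp [ha, ht0, hx'0 a]
    · intro a ha
      have hae : a ≠ e := fun h => ha (h ▸ he)
      simp [hae, hx'z a (fun h => ha (hs's h))]
    · intro U hU
      by_cases heU : e ∈ U
      · have hUe : U.erase e ⊆ s' := erase_subset_erase e hU
        rw [← Finset.add_sum_erase U _ heU]
        have hsum : ∑ a ∈ U.erase e, (if a = e then t else x' a) = ∑ a ∈ U.erase e, x' a :=
          Finset.sum_congr rfl (fun a ha => if_neg (ne_of_mem_erase ha))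
        rw [if_pos rfl, hsum]
        have h1 := hx'A (U.erase e) hUe
        have h2 : rA' (U.erase e) ≤ rA (insert e (U.erase e)) - t := min_le_right _ _
        rw [insert_erase heU] at h2
        linarith
      · have hUs' : U ⊆ s' := subset_erase.mpr ⟨hU, heU⟩
        have hsum : ∑ a ∈ U, (if a = e then t else x' a) = ∑ a ∈ U, x' a :=
          Finset.sum_congr rfl (fun a ha => if_neg (fun h => heU (by rw [← h]; exact ha)))
        rw [hsum]
        exact le_trans (hx'A U hUs') (min_le_left _ _)
    · intro U hU
      by_cases heU : e ∈ U
      · have hUe : U.erase e ⊆ s' := erase_subset_erase e hU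
        rw [← Finset.add_sum_erase U _ heU]
        have hsum : ∑ a ∈ U.erase e, (if a = e then t else x' a) = ∑ a ∈ U.erase e, x' a :=
          Finset.sum_congr rfl (fun a ha => if_neg (ne_of_mem_erase ha))
        rw [if_pos rfl, hsum]
        have h1 := hx'B (U.erase e) hUe
        have h2 : rB' (U.erase e) ≤ rB (insert e (U.erase e)) - t := min_le_right _ _
        rw [insert_erase heU] at h2
        linarith
      · have hUs' : U ⊆ s' := subset_erase.mpr ⟨hU, heU⟩
        have hsum : ∑ a ∈ U, (if a = e then t else x' a) = ∑ a ∈ U, x' a :=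
          Finset.sum_congr rfl (fun a ha => if_neg (fun h => heU (by rw [← h]; exact ha)))
        rw [hsum]
        exact le_trans (hx'B U hUs') (min_le_left _ _)
    · rw [← Finset.add_sum_erase s _ he]
      have hsum : ∑ a ∈ s.erase e, (if a = e then t else x' a) = ∑ a ∈ s.erase e, x' a :=
        Finset.sum_congr rfl (fun a ha => if_neg (ne_of_mem_erase ha))
      rw [if_pos rfl, hsum, ← hs', hx's]
      ring

/-- If `F` is at most the polymatroid-intersection min, then there is a common point
of the two polymatroids with total mass exactly `F`. -/
theorem stmt12 {E : Type*} [Fintype E] [DecidableEq E]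
    (rA rB : Finset E → ℝ)
    (hA0 : rA ∅ = 0) (hB0 : rB ∅ = 0)
    (hAmono : ∀ U V : Finset E, U ⊆ V → rA U ≤ rA V)
    (hBmono : ∀ U V : Finset E, U ⊆ V → rB U ≤ rB V)
    (hAsub : ∀ U V : Finset E, rA (U ∪ V) + rA (U ∩ V) ≤ rA U + rA V)
    (hBsub : ∀ U V : Finset E, rB (U ∪ V) + rB (U ∩ V) ≤ rB U + rB V)
    (F : ℝ) (hF0 : 0 ≤ F)
    (hF : ∀ T : Finset E, F ≤ rA Tᶜ + rB T) :
    ∃ x : E → ℝ, (∀ e, 0 ≤ x e) ∧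
      (∀ U : Finset E, ∑ e ∈ U, x e ≤ rA U) ∧
      (∀ U : Finset E, ∑ e ∈ U, x e ≤ rB U) ∧ ∑ e, x e = F := by
  obtain ⟨x, hx0, _, hxA, hxB, hxs⟩ :=
    key_step Finset.univ rA rB hA0 hB0 hAmono hBmono hAsub hBsub F hF0
      (fun T _ => by rw [← Finset.compl_eq_univ_sdiff]; exact hF T)
  exact ⟨x, hx0, fun U => hxA U (subset_univ U), fun U => hxB U (subset_univ U), hxs⟩
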